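/- Suppose the seminorm $\varsigma$ dominates $\sigma$ in the sense $|\sigma(f,g)| \le c\, \varsigma(f)\varsigma(g)$ for all $f,g \in E$. If $\mu, \nu$ are finite complex Borel measures with $\int_E \varsigma(f)\, d|\mu|(f) < \infty$ and $\int_E \varsigma(g)\, d|\nu|(g) < \infty$, then the Poisson bracket measure $\{\mu,\nu\}_0(\Lambda) := \int_E \int_E \sigma(f,g) \mathbf{1}_\Lambda(f+g)\, d\mu(f)\, d\nu(g)$ is a well-defined finite complex measure with $\|\{\mu,\nu\}_0\|_1 \le c \left(\int \varsigma\, d|\mu|\right)\left(\int \varsigma\, d|\nu|\right)$. -/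

import Mathlib

open MeasureTheory Complex Filter

/-- A finite complex Borel measure, represented by its variation measure
together with a density of modulus one (polar decomposition). -/
structure CMeasure (E : Type*) [MeasurableSpace E] where
  var : MeasureTheory.Measure E
  finite : MeasureTheory.IsFiniteMeasure var
  density : E → ℂ
  meas_density : Measurable density
  norm_density : ∀ f, ‖density f‖ = 1

namespace CMeasure

/-- The value `μ(Λ)` of the complex measure on a set `Λ`. -/
noncomputable def val {E : Type*} [MeasurableSpace E] (μ : CMeasure E) (Λ : Set E) : ℂ :=
  ∫ f in Λ, μ.density f ∂μ.var

/-- The integral `∫ a dμ` of a complex function against the complex measure. -/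
noncomputable def integral {E : Type*} [MeasurableSpace E] (μ : CMeasure E) (a : E → ℂ) : ℂ :=
  ∫ f, a f * μ.density f ∂μ.var

/-- The total variation norm `‖μ‖₁ = |μ|(E)`. -/
noncomputable def norm1 {E : Type*} [MeasurableSpace E] (μ : CMeasure E) : ℝ :=
  (μ.var Set.univ).toReal

end CMeasure

/-- The set of partial sums `∑ ‖φ(Λ_k)‖` over finite disjoint families of
measurable sets, whose supremum is the total variation norm of the set function `φ`. -/
def tvSet {E : Type*} [MeasurableSpace E] (φ : Set E → ℂ) : Set ℝ :=
  { r | ∃ (n : ℕ) (Λ : Fin n → Set E), (∀ i, MeasurableSet (Λ i)) ∧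
      Pairwise (Function.onFun Disjoint Λ) ∧ r = ∑ i, ‖φ (Λ i)‖ }

/-- The total variation norm of a complex set function. -/
noncomputable def tvNorm {E : Type*} [MeasurableSpace E] (φ : Set E → ℂ) : ℝ :=
  sSup (tvSet φ)

/-- Complex-valued indicator function of a set. -/
noncomputable def cind {E : Type*} (Λ : Set E) (h : E) : ℂ :=
  Set.indicator Λ (fun _ => (1 : ℂ)) h

/-- Twisted convolution `(μ ⋆_hb ν)(Λ) = ∫∫ e^{-(i/2)hbσ(f,g)} 1_Λ(f+g) dμ(f) dν(g)`,
as a set function. -/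
noncomputable def twistVal {E : Type*} [MeasurableSpace E] [Add E]
    (σ : E → E → ℝ) (hb : ℝ) (μ ν : CMeasure E) (Λ : Set E) : ℂ :=
  μ.integral fun f => ν.integral fun g =>
    Complex.exp (-(Complex.I / 2) * (hb : ℂ) * (σ f g : ℂ)) * cind Λ (f + g)

/-- Poisson bracket `{μ,ν}₀(Λ) = ∫∫ σ(f,g) 1_Λ(f+g) dμ(f) dν(g)`, as a set function. -/
noncomputable def pbVal {E : Type*} [MeasurableSpace E] [Add E]
    (σ : E → E → ℝ) (μ ν : CMeasure E) (Λ : Set E) : ℂ :=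
  μ.integral fun f => ν.integral fun g => ((σ f g : ℝ) : ℂ) * cind Λ (f + g)

/-- if `|σ(f,g)| ≤ c ς(f) ς(g)` and `μ, ν` have finite first ς-moments,
then the Poisson bracket `{μ,ν}₀(Λ) = ∫∫ σ(f,g) 1_Λ(f+g) dμ(f) dν(g)` is a
well-defined finite complex measure with `‖{μ,ν}₀‖₁ ≤ c (∫ ς d|μ|)(∫ ς d|ν|)`. -/

lemma aux_norm_le_one (z : ℂ)
    (h : ∀ q : ℚ, (Complex.exp (-((q:ℝ):ℂ) * Complex.I) * z).re ≤ 1) : ‖z‖ ≤ 1 := by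
  set φ : ℝ → ℝ := fun t => (Complex.exp (-(t:ℂ) * Complex.I) * z).re with hφ
  have hcont : Continuous φ := by
    apply Complex.continuous_re.comp
    exact (Complex.continuous_exp.comp (by continuity)).mul continuous_const
  have hS : IsClosed {t : ℝ | φ t ≤ 1} := isClosed_le hcont continuous_const
  have hdense : Dense {t : ℝ | φ t ≤ 1} := Rat.denseRange_cast.mono (by
    rintro _ ⟨q, rfl⟩; exact h q)
  have hall : ∀ t, φ t ≤ 1 := by
    intro t
    have huniv : {t : ℝ | φ t ≤ 1} = Set.univ := hS.closure_eq ▸ hdense.closure_eq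
    have : t ∈ {t : ℝ | φ t ≤ 1} := huniv ▸ Set.mem_univ t
    exact this
  set a := Complex.arg z with ha
  have hφa := hall a
  have hz0 := Complex.norm_mul_exp_arg_mul_I z
  rw [← ha] at hz0
  have hz : Complex.exp (-(a : ℂ) * Complex.I) * z = (‖z‖ : ℂ) := by
    calc Complex.exp (-(a:ℂ) * Complex.I) * z
        = (‖z‖ : ℂ) * (Complex.exp (-(a:ℂ) * Complex.I) * Complex.exp ((a:ℝ) * Complex.I)) := by
          conv_lhs => rw [← hz0]
          ring
      _ = (‖z‖ : ℂ) := by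
          rw [← Complex.exp_add]
          ring_nf
          simp
  rw [hφ] at hφa
  simp only [hz, Complex.ofReal_re] at hφa
  simpa using hφa


open scoped ENNReal NNReal

theorem poisson_bracket_well_defined
    {E : Type*} [AddCommGroup E] [Module ℝ E] [MeasurableSpace E] [MeasurableAdd₂ E]
    (σ : E →ₗ[ℝ] E →ₗ[ℝ] ℝ) (hσ_anti : ∀ f g : E, σ f g = - σ g f)
    (hσ_meas : Measurable fun p : E × E => σ p.1 p.2)
    (ς : Seminorm ℝ E) (hς_meas : Measurable fun f : E => (ς f : ℝ))
    (c : ℝ) (hc : 0 < c) (hdom : ∀ f g : E, |σ f g| ≤ c * ς f * ς g)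
    (μ ν : CMeasure E)
    (hμ : MeasureTheory.Integrable (fun f : E => (ς f : ℝ)) μ.var)
    (hν : MeasureTheory.Integrable (fun g : E => (ς g : ℝ)) ν.var) :
    ∃ ρ : CMeasure E,
      (∀ Λ : Set E, MeasurableSet Λ → ρ.val Λ = pbVal (fun a b => σ a b) μ ν Λ) ∧
      ρ.norm1 ≤ c * (∫ f, (ς f : ℝ) ∂μ.var) * (∫ g, (ς g : ℝ) ∂ν.var) := by
  classical
  haveI := μ.finite
  haveI := ν.finite
  set π := μ.var.prod ν.var with hπdef
  set H : E × E → ℂ := fun p => ((σ p.1 p.2 : ℝ) : ℂ) * μ.density p.1 * ν.density p.2 with hHdef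
  have hHmeas : Measurable H :=
    ((Complex.measurable_ofReal.comp hσ_meas).mul (μ.meas_density.comp measurable_fst)).mul
      (ν.meas_density.comp measurable_snd)
  have hHnorm : ∀ p : E × E, ‖H p‖ = |σ p.1 p.2| := by
    intro p
    simp [hHdef, norm_mul, μ.norm_density, ν.norm_density, Complex.norm_real, Real.norm_eq_abs]
  have hςς : Integrable (fun p : E × E => c * ς p.1 * ς p.2) π := by
    have h := (hμ.const_mul c).mul_prod hν
    simpa [mul_assoc] using h
  have hςς_nonneg : ∀ p : E × E, 0 ≤ c * ς p.1 * ς p.2 := fun p =>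
    mul_nonneg (mul_nonneg hc.le (apply_nonneg ς _)) (apply_nonneg ς _)
  have hHle : ∀ p : E × E, ‖H p‖ ≤ c * ς p.1 * ς p.2 := fun p => by
    rw [hHnorm]; exact hdom p.1 p.2
  have hH_int : Integrable H π := by
    refine hςς.mono hHmeas.aestronglyMeasurable (ae_of_all _ fun p => ?_)
    rw [Real.norm_eq_abs, _root_.abs_of_nonneg (hςς_nonneg p)]
    exact hHle p
  have hadd : Measurable (fun p : E × E => p.1 + p.2) := measurable_add
  set κ : Measure (E × E) := π.withDensity (fun p => ENNReal.ofReal ‖H p‖) with hκdef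
  set m : Measure E := Measure.map (fun p : E × E => p.1 + p.2) κ with hmdef
  have hκuniv : κ Set.univ ≠ ⊤ := by
    rw [hκdef, withDensity_apply _ MeasurableSet.univ, setLIntegral_univ]
    have h := hH_int.hasFiniteIntegral
    rw [HasFiniteIntegral] at h
    have heq : ∫⁻ p, ENNReal.ofReal ‖H p‖ ∂π = ∫⁻ p, (‖H p‖₊ : ℝ≥0∞) ∂π :=
      lintegral_congr fun p => ofReal_norm_eq_enorm _
    rw [heq]
    exact h.ne
  haveI hmfin : IsFiniteMeasure m := by
    constructor
    rw [hmdef, Measure.map_apply hadd MeasurableSet.univ, Set.preimage_univ]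
    exact lt_top_iff_ne_top.mpr hκuniv
  have hmval : ∀ Λ : Set E, MeasurableSet Λ →
      (m Λ).toReal = ∫ p in (fun p : E × E => p.1 + p.2) ⁻¹' Λ, ‖H p‖ ∂π := by
    intro Λ hΛ
    rw [hmdef, Measure.map_apply hadd hΛ, hκdef, withDensity_apply _ (hadd hΛ),
      ← ofReal_integral_eq_lintegral_ofReal (hH_int.norm.integrableOn)
        (ae_of_all _ fun p => norm_nonneg _),
      ENNReal.toReal_ofReal (integral_nonneg fun p => norm_nonneg _)]
  -- integrability of dominated nonnegative functions
  have hdom_int : ∀ w : E × E → ℝ, Measurable w → (∀ p, 0 ≤ w p) → (∀ p, w p ≤ ‖H p‖) →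
      Integrable w π := by
    intro w hwmeas hw0 hwle
    refine hH_int.norm.mono hwmeas.aestronglyMeasurable (ae_of_all _ fun p => ?_)
    rw [Real.norm_eq_abs, _root_.abs_of_nonneg (hw0 p), Real.norm_eq_abs,
      _root_.abs_of_nonneg (norm_nonneg _)]
    exact hwle p
  -- generic construction of the density of a part
  have key : ∀ w : E × E → ℝ, Measurable w → (∀ p, 0 ≤ w p) → (∀ p, w p ≤ ‖H p‖) →
      ∃ g : E → ℝ, Measurable g ∧ Integrable g m ∧ (∀ x, 0 ≤ g x) ∧
        ∀ Λ : Set E, MeasurableSet Λ →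
          ∫ x in Λ, g x ∂m = ∫ p in (fun p : E × E => p.1 + p.2) ⁻¹' Λ, w p ∂π := by
    intro w hwmeas hw0 hwle
    have hw_int : Integrable w π := hdom_int w hwmeas hw0 hwle
    set mw : Measure E :=
      Measure.map (fun p : E × E => p.1 + p.2) (π.withDensity fun p => ENNReal.ofReal (w p))
      with hmwdef
    have hle : mw ≤ m := by
      refine Measure.map_mono ?_ hadd
      exact withDensity_mono (ae_of_all _ fun p => ENNReal.ofReal_le_ofReal (hwle p))
    haveI : IsFiniteMeasure mw := isFiniteMeasure_of_le m hle
    have hac : mw ≪ m := hle.absolutelyContinuous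
    refine ⟨fun x => (mw.rnDeriv m x).toReal, (Measure.measurable_rnDeriv _ _).ennreal_toReal,
      Measure.integrable_toReal_rnDeriv, fun x => ENNReal.toReal_nonneg, fun Λ hΛ => ?_⟩
    rw [Measure.setIntegral_toReal_rnDeriv hac Λ, measureReal_def, hmwdef, Measure.map_apply hadd hΛ,
      withDensity_apply _ (hadd hΛ),
      ← ofReal_integral_eq_lintegral_ofReal (hw_int.integrableOn) (ae_of_all _ fun p => hw0 p),
      ENNReal.toReal_ofReal (integral_nonneg fun p => hw0 p)]
  -- the four parts
  have habs_re : ∀ p : E × E, max (H p).re 0 ≤ ‖H p‖ := fun p =>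
    max_le ((le_abs_self _).trans (Complex.abs_re_le_norm _)) (norm_nonneg _)
  have habs_re' : ∀ p : E × E, max (-(H p).re) 0 ≤ ‖H p‖ := fun p =>
    max_le ((neg_le_abs _).trans (Complex.abs_re_le_norm _)) (norm_nonneg _)
  have habs_im : ∀ p : E × E, max (H p).im 0 ≤ ‖H p‖ := fun p =>
    max_le ((le_abs_self _).trans (Complex.abs_im_le_norm _)) (norm_nonneg _)
  have habs_im' : ∀ p : E × E, max (-(H p).im) 0 ≤ ‖H p‖ := fun p =>
    max_le ((neg_le_abs _).trans (Complex.abs_im_le_norm _)) (norm_nonneg _)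
  have hre_meas : Measurable fun p : E × E => (H p).re := Complex.measurable_re.comp hHmeas
  have him_meas : Measurable fun p : E × E => (H p).im := Complex.measurable_im.comp hHmeas
  obtain ⟨g₁, hg₁meas, hg₁int, hg₁0, hg₁⟩ := key (fun p => max (H p).re 0)
    (hre_meas.max measurable_const) (fun p => le_max_right _ _) habs_re
  obtain ⟨g₂, hg₂meas, hg₂int, hg₂0, hg₂⟩ := key (fun p => max (-(H p).re) 0)
    (hre_meas.neg.max measurable_const) (fun p => le_max_right _ _) habs_re'
  obtain ⟨g₃, hg₃meas, hg₃int, hg₃0, hg₃⟩ := key (fun p => max (H p).im 0)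
    (him_meas.max measurable_const) (fun p => le_max_right _ _) habs_im
  obtain ⟨g₄, hg₄meas, hg₄int, hg₄0, hg₄⟩ := key (fun p => max (-(H p).im) 0)
    (him_meas.neg.max measurable_const) (fun p => le_max_right _ _) habs_im'
  set G : E → ℂ := fun x => ((g₁ x - g₂ x : ℝ) : ℂ) + ((g₃ x - g₄ x : ℝ) : ℂ) * Complex.I
    with hGdef
  have hGmeas : Measurable G := by
    apply Measurable.add
    · exact Complex.measurable_ofReal.comp (hg₁meas.sub hg₂meas)
    · exact (Complex.measurable_ofReal.comp (hg₃meas.sub hg₄meas)).mul measurable_const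
  have hGint : Integrable G m := by
    apply Integrable.add
    · exact (hg₁int.sub hg₂int).ofReal
    · exact ((hg₃int.sub hg₄int).ofReal).mul_const Complex.I
  -- main value identity: ∫_Λ G dm = ∫_{add⁻¹Λ} H dπ
  have hval : ∀ Λ : Set E, MeasurableSet Λ →
      ∫ x in Λ, G x ∂m = ∫ p in (fun p : E × E => p.1 + p.2) ⁻¹' Λ, H p ∂π := by
    intro Λ hΛ
    have h1int := hdom_int _ (hre_meas.max measurable_const) (fun p => le_max_right _ _) habs_re
    have h2int := hdom_int _ (hre_meas.neg.max measurable_const)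
      (fun p => le_max_right _ _) habs_re'
    have h3int := hdom_int _ (him_meas.max measurable_const) (fun p => le_max_right _ _) habs_im
    have h4int := hdom_int _ (him_meas.neg.max measurable_const)
      (fun p => le_max_right _ _) habs_im'
    have hre : ∫ x in Λ, (g₁ x - g₂ x) ∂m
        = ∫ p in (fun p : E × E => p.1 + p.2) ⁻¹' Λ, (H p).re ∂π := by
      rw [integral_sub (hg₁int.integrableOn) (hg₂int.integrableOn), hg₁ Λ hΛ, hg₂ Λ hΛ,
        ← integral_sub (f := fun p => max (H p).re 0) (g := fun p => max (-(H p).re) 0)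
          (h1int.integrableOn) (h2int.integrableOn)]
      refine integral_congr_ae (ae_of_all _ fun p => ?_)
      exact max_zero_sub_max_neg_zero_eq_self _
    have him : ∫ x in Λ, (g₃ x - g₄ x) ∂m
        = ∫ p in (fun p : E × E => p.1 + p.2) ⁻¹' Λ, (H p).im ∂π := by
      rw [integral_sub (hg₃int.integrableOn) (hg₄int.integrableOn), hg₃ Λ hΛ, hg₄ Λ hΛ,
        ← integral_sub (f := fun p => max (H p).im 0) (g := fun p => max (-(H p).im) 0)
          (h3int.integrableOn) (h4int.integrableOn)]
      refine integral_congr_ae (ae_of_all _ fun p => ?_)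
      exact max_zero_sub_max_neg_zero_eq_self _
    calc ∫ x in Λ, G x ∂m
        = (∫ x in Λ, ((g₁ x - g₂ x : ℝ) : ℂ) ∂m)
          + (∫ x in Λ, ((g₃ x - g₄ x : ℝ) : ℂ) * Complex.I ∂m) := by
          rw [hGdef]
          exact integral_add ((hg₁int.sub hg₂int).ofReal.integrableOn)
            (((hg₃int.sub hg₄int).ofReal.mul_const Complex.I).integrableOn)
      _ = ((∫ x in Λ, (g₁ x - g₂ x) ∂m : ℝ) : ℂ)
          + ((∫ x in Λ, (g₃ x - g₄ x) ∂m : ℝ) : ℂ) * Complex.I := by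
          rw [integral_mul_const]
          congr 1
          · exact integral_ofReal
          · congr 1
            exact integral_ofReal
      _ = ((∫ p in (fun p : E × E => p.1 + p.2) ⁻¹' Λ, (H p).re ∂π : ℝ) : ℂ)
          + ((∫ p in (fun p : E × E => p.1 + p.2) ⁻¹' Λ, (H p).im ∂π : ℝ) : ℂ) * Complex.I := by
          rw [hre, him]
      _ = ∫ p in (fun p : E × E => p.1 + p.2) ⁻¹' Λ, H p ∂π := by
          have hsplit : ∫ p in (fun p : E × E => p.1 + p.2) ⁻¹' Λ, H p ∂π
              = (∫ p in (fun p : E × E => p.1 + p.2) ⁻¹' Λ, (((H p).re : ℝ) : ℂ) ∂π)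
                + (∫ p in (fun p : E × E => p.1 + p.2) ⁻¹' Λ,
                    (((H p).im : ℝ) : ℂ) * Complex.I ∂π) := by
            have hre1 : Integrable (fun p : E × E => (((H p).re : ℝ) : ℂ))
                (π.restrict ((fun p : E × E => p.1 + p.2) ⁻¹' Λ)) :=
              (hH_int.re.integrableOn).ofReal
            have him1 : Integrable (fun p : E × E => (((H p).im : ℝ) : ℂ) * Complex.I)
                (π.restrict ((fun p : E × E => p.1 + p.2) ⁻¹' Λ)) :=
              ((hH_int.im.integrableOn).ofReal).mul_const Complex.I
            rw [← integral_add hre1 him1]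
            refine integral_congr_ae (ae_of_all _ fun p => ?_)
            exact (Complex.re_add_im _).symm
          rw [hsplit, integral_mul_const]
          congr 1
          · exact integral_ofReal.symm
          · congr 1
            exact integral_ofReal.symm
  -- relate pbVal to the product integral
  have hpb : ∀ Λ : Set E, MeasurableSet Λ →
      pbVal (fun a b => σ a b) μ ν Λ = ∫ p in (fun p : E × E => p.1 + p.2) ⁻¹' Λ, H p ∂π := by
    intro Λ hΛ
    have hcind_meas : Measurable fun p : E × E => cind Λ (p.1 + p.2) := by
      unfold cind
      exact (measurable_const.indicator hΛ).comp hadd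
    have hFint : Integrable (fun p : E × E => H p * cind Λ (p.1 + p.2)) π := by
      refine hH_int.mono (hHmeas.mul hcind_meas).aestronglyMeasurable (ae_of_all _ fun p => ?_)
      rw [norm_mul]
      have : ‖cind Λ (p.1 + p.2)‖ ≤ 1 := by
        unfold cind
        by_cases h : p.1 + p.2 ∈ Λ <;> simp [Set.indicator, h]
      calc ‖H p‖ * ‖cind Λ (p.1 + p.2)‖ ≤ ‖H p‖ * 1 :=
            mul_le_mul_of_nonneg_left this (norm_nonneg _)
        _ = ‖H p‖ := mul_one _
    have hfub := integral_prod _ hFint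
    have hstep : pbVal (fun a b => σ a b) μ ν Λ = ∫ p, H p * cind Λ (p.1 + p.2) ∂π := by
      rw [hfub]
      unfold pbVal CMeasure.integral
      refine integral_congr_ae (ae_of_all _ fun f => ?_)
      show (∫ g, (((σ f g : ℝ) : ℂ) * cind Λ (f + g)) * ν.density g ∂ν.var) * μ.density f
        = ∫ g, H (f, g) * cind Λ ((f, g).1 + (f, g).2) ∂ν.var
      rw [← integral_mul_const]
      refine integral_congr_ae (ae_of_all _ fun g => ?_)
      show ((σ f g : ℝ) : ℂ) * cind Λ (f + g) * ν.density g * μ.density f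
        = H (f, g) * cind Λ ((f, g).1 + (f, g).2)
      rw [hHdef]
      ring
    rw [hstep, ← integral_indicator (hadd hΛ)]
    refine integral_congr_ae (ae_of_all _ fun p => ?_)
    unfold cind
    by_cases h : p.1 + p.2 ∈ Λ <;>
      simp [Set.indicator, h, Set.mem_preimage]
  -- norm bound for set integrals of G
  have hρnorm : ∀ s : Set E, MeasurableSet s → ‖∫ x in s, G x ∂m‖ ≤ (m s).toReal := by
    intro s hs
    rw [hval s hs, hmval s hs]
    exact norm_integral_le_integral_norm _
  -- a.e. bound ‖G‖ ≤ 1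
  have hG1 : ∀ᵐ x ∂m, ‖G x‖ ≤ 1 := by
    have hq : ∀ q : ℚ, ∀ᵐ x ∂m, (Complex.exp (-((q : ℝ) : ℂ) * Complex.I) * G x).re ≤ 1 := by
      intro q
      set u : ℂ := Complex.exp (-((q : ℝ) : ℂ) * Complex.I) with hu
      have hunorm : ‖u‖ = 1 := by
        rw [hu, Complex.norm_exp]
        simp
      have h0 : 0 ≤ᵐ[m] fun x => 1 - (u * G x).re := by
        apply ae_nonneg_of_forall_setIntegral_nonneg
        · exact (integrable_const 1).sub ((hGint.const_mul u).re)
        · intro s hs _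
          have hint1 : Integrable (fun x : E => (u * G x).re) m := (hGint.const_mul u).re
          rw [integral_sub (integrable_const 1).integrableOn hint1.integrableOn]
          have h1 : ∫ x in s, (1 : ℝ) ∂m = (m s).toReal := by
            simp [Measure.restrict_apply_univ, measureReal_def]
          have h2 : ∫ x in s, (u * G x).re ∂m = (u * ∫ x in s, G x ∂m).re := by
            rw [← integral_const_mul]
            have h := integral_re ((hGint.const_mul u).integrableOn (s := s))
            simpa using h
          rw [h1, h2]
          have h3 : (u * ∫ x in s, G x ∂m).re ≤ ‖u * ∫ x in s, G x ∂m‖ :=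
            Complex.re_le_norm _
          rw [norm_mul, hunorm, one_mul] at h3
          linarith [hρnorm s hs, h3]
      filter_upwards [h0] with x hx
      simp only [Pi.zero_apply] at hx
      linarith
    have hall := ae_all_iff.mpr hq
    filter_upwards [hall] with x hx
    exact aux_norm_le_one (G x) hx
  -- total mass bound
  have hmuniv : (m Set.univ).toReal ≤ c * (∫ f, (ς f : ℝ) ∂μ.var) * (∫ g, (ς g : ℝ) ∂ν.var) := by
    rw [hmval Set.univ MeasurableSet.univ]
    have h1 : ∫ p in (fun p : E × E => p.1 + p.2) ⁻¹' Set.univ, ‖H p‖ ∂π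
        = ∫ p, ‖H p‖ ∂π := by
      simp
    rw [h1]
    calc ∫ p, ‖H p‖ ∂π ≤ ∫ p, c * ς p.1 * ς p.2 ∂π :=
          integral_mono hH_int.norm hςς hHle
      _ = c * (∫ f, (ς f : ℝ) ∂μ.var) * (∫ g, (ς g : ℝ) ∂ν.var) := by
          have : ∫ p : E × E, (c * ς p.1) * ς p.2 ∂π
              = (∫ f, c * ς f ∂μ.var) * ∫ g, (ς g : ℝ) ∂ν.var :=
            integral_prod_mul (fun f => c * ς f) (fun g => (ς g : ℝ))
          rw [show (fun p : E × E => c * ς p.1 * ς p.2) = fun p : E × E => (c * ς p.1) * ς p.2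
            from rfl] at *
          rw [this, integral_const_mul]
  -- construct ρ
  have hvarfin : IsFiniteMeasure (m.withDensity fun x => (‖G x‖₊ : ℝ≥0∞)) := by
    constructor
    rw [withDensity_apply _ MeasurableSet.univ, setLIntegral_univ]
    calc ∫⁻ x, (‖G x‖₊ : ℝ≥0∞) ∂m ≤ ∫⁻ _, 1 ∂m := by
          refine lintegral_mono_ae ?_
          filter_upwards [hG1] with x hx
          calc (‖G x‖₊ : ℝ≥0∞) = ENNReal.ofReal ‖G x‖ := (ofReal_norm_eq_enorm _).symm
            _ ≤ ENNReal.ofReal 1 := ENNReal.ofReal_le_ofReal hx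
            _ = 1 := ENNReal.ofReal_one
      _ = m Set.univ := by simp
      _ < ⊤ := measure_lt_top m _
  refine ⟨⟨m.withDensity fun x => (‖G x‖₊ : ℝ≥0∞), hvarfin,
    fun x => if G x = 0 then 1 else G x / (‖G x‖ : ℂ), ?_, ?_⟩, ?_, ?_⟩
  · refine Measurable.ite (hGmeas (measurableSet_singleton 0)) measurable_const ?_
    exact hGmeas.div (Complex.measurable_ofReal.comp hGmeas.norm)
  · intro x
    by_cases h : G x = 0
    · simp [h]
    · have hnz : ‖G x‖ ≠ 0 := norm_ne_zero_iff.mpr h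
      show ‖if G x = 0 then (1 : ℂ) else G x / (‖G x‖ : ℂ)‖ = 1
      rw [if_neg h, norm_div, Complex.norm_real, Real.norm_eq_abs, _root_.abs_of_nonneg (norm_nonneg _),
        div_self hnz]
  · intro Λ hΛ
    show (∫ x in Λ, (if G x = 0 then 1 else G x / (‖G x‖ : ℂ))
        ∂(m.withDensity fun x => (‖G x‖₊ : ℝ≥0∞))) = _
    rw [setIntegral_withDensity_eq_setIntegral_smul hGmeas.nnnorm _ hΛ]
    have heq : ∀ x, ‖G x‖₊ • (if G x = 0 then 1 else G x / (‖G x‖ : ℂ)) = G x := by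
      intro x
      by_cases h : G x = 0
      · simp [h]
      · have hnz : (‖G x‖ : ℂ) ≠ 0 := by
          simpa using norm_ne_zero_iff.mpr h
        rw [if_neg h, NNReal.smul_def, coe_nnnorm, Complex.real_smul, mul_div_cancel₀ _ hnz]
    calc ∫ x in Λ, ‖G x‖₊ • (if G x = 0 then 1 else G x / (‖G x‖ : ℂ)) ∂m
        = ∫ x in Λ, G x ∂m := by
          refine integral_congr_ae (ae_of_all _ fun x => heq x)
      _ = pbVal (fun a b => σ a b) μ ν Λ := by rw [hval Λ hΛ, hpb Λ hΛ]
  · show ((m.withDensity fun x => (‖G x‖₊ : ℝ≥0∞)) Set.univ).toReal ≤ _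
    refine le_trans ?_ hmuniv
    refine ENNReal.toReal_mono (measure_ne_top m _) ?_
    rw [withDensity_apply _ MeasurableSet.univ, setLIntegral_univ]
    calc ∫⁻ x, (‖G x‖₊ : ℝ≥0∞) ∂m ≤ ∫⁻ _, 1 ∂m := by
          refine lintegral_mono_ae ?_
          filter_upwards [hG1] with x hx
          calc (‖G x‖₊ : ℝ≥0∞) = ENNReal.ofReal ‖G x‖ := (ofReal_norm_eq_enorm _).symm
            _ ≤ ENNReal.ofReal 1 := ENNReal.ofReal_le_ofReal hx
            _ = 1 := ENNReal.ofReal_one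
      _ = m Set.univ := by simp
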